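/- 3ε-KKT transfer (Theorem 2.1, final claim): Let (Ū, V̄, λ̄) be an ε-KKT point of the penalized problem with ε > 0, ‖Ū‖_F ≤ σ, ‖V̄‖_F ≤ σ and ‖λ̄‖_2 ≤ σ, and set Û = (Ū + V̄)/2. If the penalty parameter satisfies γ > max{ √(‖𝒜‖_2)(ε + L_f σ + √(s_A) σ²)/(2√(2ε)), √(2L_0 σ³ + 3Lσ)(ε + L_f σ + √(s_A) σ²)/√(2ε) }, then (Û, 2λ̄) is a 3ε-KKT point of the Burer–Monteiro problem. -/

import Mathlib

open Matrix
open scoped BigOperators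

noncomputable section

/-- Frobenius inner product of two real matrices. -/
def frobInner {α β : Type*} [Fintype α] [Fintype β] (X Y : Matrix α β ℝ) : ℝ :=
  ∑ i, ∑ j, X i j * Y i j

/-- Frobenius norm of a real matrix. -/
def frobNorm {α β : Type*} [Fintype α] [Fintype β] (X : Matrix α β ℝ) : ℝ :=
  Real.sqrt (∑ i, ∑ j, (X i j) ^ 2)

/-- Euclidean norm of a real vector. -/
def vecNorm {α : Type*} [Fintype α] (v : α → ℝ) : ℝ :=
  Real.sqrt (∑ i, (v i) ^ 2)

/-- The linear map `𝒜(X) = (⟨A 1, X⟩, …, ⟨A m, X⟩)`. -/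
def Aop {n m : ℕ} (A : Fin m → Matrix (Fin n) (Fin n) ℝ)
    (X : Matrix (Fin n) (Fin n) ℝ) : Fin m → ℝ :=
  fun i => frobInner (A i) X

/-- `s_A = Σ_i ‖A_i‖_F²`. -/
def sA {n m : ℕ} (A : Fin m → Matrix (Fin n) (Fin n) ℝ) : ℝ :=
  ∑ i, (frobNorm (A i)) ^ 2

/-- `(U, V, λ)` is an ε-KKT point of the penalized problem
`min f(UVᵀ) + (γ/2)‖U-V‖² s.t. 𝒜(UVᵀ) = b`, where `grad` denotes the gradient of `f`. -/
def IsPenEpsKKT {n m r : ℕ} (grad : Matrix (Fin n) (Fin n) ℝ → Matrix (Fin n) (Fin n) ℝ)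
    (A : Fin m → Matrix (Fin n) (Fin n) ℝ) (b : Fin m → ℝ) (γ ε : ℝ)
    (U V : Matrix (Fin n) (Fin r) ℝ) (lam : Fin m → ℝ) : Prop :=
  frobNorm (grad (U * Vᵀ) * V + γ • (U - V) + ∑ i, lam i • (A i * V)) ≤ ε ∧
  frobNorm (grad (V * Uᵀ) * U + γ • (V - U) + ∑ i, lam i • (A i * U)) ≤ ε ∧
  vecNorm (fun i => Aop A (U * Vᵀ) i - b i) ≤ ε

/-- `(U, λ)` is an ε-KKT point of the Burer–Monteiro problem
`min f(UUᵀ) s.t. 𝒜(UUᵀ) = b`, where `grad` denotes the gradient of `f`. -/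
def IsBMEpsKKT {n m r : ℕ} (grad : Matrix (Fin n) (Fin n) ℝ → Matrix (Fin n) (Fin n) ℝ)
    (A : Fin m → Matrix (Fin n) (Fin n) ℝ) (b : Fin m → ℝ) (ε : ℝ)
    (U : Matrix (Fin n) (Fin r) ℝ) (lam : Fin m → ℝ) : Prop :=
  frobNorm ((2 : ℝ) • (grad (U * Uᵀ) * U) + ∑ i, lam i • (A i * U)) ≤ ε ∧
  vecNorm (fun i => Aop A (U * Uᵀ) i - b i) ≤ ε

/-- The augmented Lagrangian `L_ρ(U,V,λ)` of the penalized problem. -/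
def augL {n m r : ℕ} (f : Matrix (Fin n) (Fin n) ℝ → ℝ)
    (A : Fin m → Matrix (Fin n) (Fin n) ℝ) (b : Fin m → ℝ) (ρ γ : ℝ)
    (U V : Matrix (Fin n) (Fin r) ℝ) (lam : Fin m → ℝ) : ℝ :=
  f (U * Vᵀ) + γ / 2 * (frobNorm (U - V)) ^ 2
    + ∑ i, lam i * (Aop A (U * Vᵀ) i - b i)
    + ρ / 2 * (vecNorm (fun i => Aop A (U * Vᵀ) i - b i)) ^ 2

/-- The level set `S_β` of the penalty function. -/
def Sset {n m r : ℕ} (f : Matrix (Fin n) (Fin n) ℝ → ℝ)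
    (A : Fin m → Matrix (Fin n) (Fin n) ℝ) (b : Fin m → ℝ) (ρ₀ β : ℝ) :
    Set (Matrix (Fin n) (Fin r) ℝ × Matrix (Fin n) (Fin r) ℝ) :=
  {p | f (p.1 * p.2ᵀ) + ρ₀ / 2 * (frobNorm (p.1 - p.2)) ^ 2
      + ρ₀ / 2 * (vecNorm (fun i => Aop A (p.1 * p.2ᵀ) i - b i)) ^ 2 ≤ β}

/-- `𝒞(U)`: the `nr × m` matrix whose `i`-th column is the vectorization of `A_i U`. -/
def Cmat {n m r : ℕ} (A : Fin m → Matrix (Fin n) (Fin n) ℝ)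
    (U : Matrix (Fin n) (Fin r) ℝ) : Matrix (Fin n × Fin r) (Fin m) ℝ :=
  Matrix.of fun p i => (A i * U) p.1 p.2

/-- Smallest singular value of a real matrix, as the infimum of `‖Mx‖` over unit vectors. -/
def sigmaMin {α β : Type*} [Fintype α] [Fintype β] (M : Matrix α β ℝ) : ℝ :=
  sInf {s | ∃ x : β → ℝ, vecNorm x = 1 ∧ s = vecNorm (M.mulVec x)}

/-- Norm of the full gradient of the augmented Lagrangian at `(U, V, λ)`
(for symmetric `f`, with `grad` the gradient of `f`). -/
def gradAugLNorm {n m r : ℕ} (grad : Matrix (Fin n) (Fin n) ℝ → Matrix (Fin n) (Fin n) ℝ)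
    (A : Fin m → Matrix (Fin n) (Fin n) ℝ) (b : Fin m → ℝ) (ρ γ : ℝ)
    (U V : Matrix (Fin n) (Fin r) ℝ) (lam : Fin m → ℝ) : ℝ :=
  Real.sqrt
    ((frobNorm (grad (U * Vᵀ) * V + γ • (U - V)
        + ∑ i, (lam i + ρ * (Aop A (U * Vᵀ) i - b i)) • (A i * V))) ^ 2
      + (frobNorm (grad (V * Uᵀ) * U + γ • (V - U)
        + ∑ i, (lam i + ρ * (Aop A (U * Vᵀ) i - b i)) • (A i * U))) ^ 2
      + (vecNorm (fun i => Aop A (U * Vᵀ) i - b i)) ^ 2)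

/-- Distance between two primal-dual triples, induced by the Frobenius/Euclidean norms. -/
def tripDist {n m r : ℕ}
    (p q : Matrix (Fin n) (Fin r) ℝ × Matrix (Fin n) (Fin r) ℝ × (Fin m → ℝ)) : ℝ :=
  Real.sqrt ((frobNorm (p.1 - q.1)) ^ 2 + (frobNorm (p.2.1 - q.2.1)) ^ 2
    + (vecNorm (fun i => p.2.2 i - q.2.2 i)) ^ 2)

/-- The set `𝒲` of KKT points of the penalized problem. -/
def KKTset {n m : ℕ} (r : ℕ) (grad : Matrix (Fin n) (Fin n) ℝ → Matrix (Fin n) (Fin n) ℝ)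
    (A : Fin m → Matrix (Fin n) (Fin n) ℝ) (b : Fin m → ℝ) (γ : ℝ) :
    Set (Matrix (Fin n) (Fin r) ℝ × Matrix (Fin n) (Fin r) ℝ × (Fin m → ℝ)) :=
  {p | IsPenEpsKKT grad A b γ 0 p.1 p.2.1 p.2.2}


attribute [local instance] Matrix.frobeniusSeminormedAddCommGroup
  Matrix.frobeniusNormedAddCommGroup Matrix.frobeniusNormedSpace

section AuxNorm

variable {α β : Type*} [Fintype α] [Fintype β]

lemma frobNorm_eq_norm (X : Matrix α β ℝ) : frobNorm X = ‖X‖ := by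
  rw [Matrix.frobenius_norm_def, frobNorm, Real.sqrt_eq_rpow]
  congr 1
  refine Finset.sum_congr rfl fun i _ => Finset.sum_congr rfl fun j _ => ?_
  rw [Real.norm_eq_abs, Real.rpow_two, sq_abs]

lemma frobInner_self (X : Matrix α β ℝ) : frobInner X X = ‖X‖ ^ 2 := by
  rw [← frobNorm_eq_norm, frobNorm, Real.sq_sqrt (by positivity)]
  simp [frobInner, sq]

lemma abs_frobInner_le (X Y : Matrix α β ℝ) : |frobInner X Y| ≤ ‖X‖ * ‖Y‖ := by
  rw [← frobNorm_eq_norm, ← frobNorm_eq_norm, frobNorm, frobNorm, frobInner]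
  have h : ∀ Z : Matrix α β ℝ, ∑ i, ∑ j, (Z i j)^2
      = ∑ p : α × β, (Z p.1 p.2) ^ 2 := fun Z => by
    rw [← Finset.univ_product_univ, Finset.sum_product]
  have h2 : ∑ i, ∑ j, X i j * Y i j = ∑ p : α × β, X p.1 p.2 * Y p.1 p.2 := by
    rw [← Finset.univ_product_univ, Finset.sum_product]
  rw [h, h, h2]
  rw [abs_le]
  constructor
  · have := Real.sum_mul_le_sqrt_mul_sqrt Finset.univ
      (fun p : α × β => -(X p.1 p.2)) (fun p => Y p.1 p.2)
    simp only [neg_mul, Finset.sum_neg_distrib, neg_sq] at this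
    linarith [this]
  · exact Real.sum_mul_le_sqrt_mul_sqrt _ _ _

lemma frobInner_le (X Y : Matrix α β ℝ) : frobInner X Y ≤ ‖X‖ * ‖Y‖ :=
  (le_abs_self _).trans (abs_frobInner_le X Y)

lemma frobInner_add_right (X Y Z : Matrix α β ℝ) :
    frobInner X (Y + Z) = frobInner X Y + frobInner X Z := by
  simp [frobInner, Matrix.add_apply, mul_add, Finset.sum_add_distrib]

lemma frobInner_sub_right (X Y Z : Matrix α β ℝ) :
    frobInner X (Y - Z) = frobInner X Y - frobInner X Z := by
  simp [frobInner, Matrix.sub_apply, mul_sub, Finset.sum_sub_distrib]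

lemma frobInner_smul_right (c : ℝ) (X Y : Matrix α β ℝ) :
    frobInner X (c • Y) = c * frobInner X Y := by
  simp [frobInner, Matrix.smul_apply, Finset.mul_sum]
  ring_nf
  exact Finset.sum_congr rfl fun i _ => Finset.sum_congr rfl fun j _ => by ring

end AuxNorm

section Deriv

variable {n : ℕ}
variable (grad : Matrix (Fin n) (Fin n) ℝ → Matrix (Fin n) (Fin n) ℝ)
variable (hess : Matrix (Fin n) (Fin n) ℝ → Matrix (Fin n) (Fin n) ℝ → Matrix (Fin n) (Fin n) ℝ)
variable (hhess : ∀ X H : Matrix (Fin n) (Fin n) ℝ, ∀ i j,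
      HasDerivAt (fun t : ℝ => grad (X + t • H) i j) (hess X H i j) 0)

include hhess

lemma hasDerivAt_grad_line (X H : Matrix (Fin n) (Fin n) ℝ) (t0 : ℝ) (i j : Fin n) :
    HasDerivAt (fun t : ℝ => grad (X + t • H) i j) (hess (X + t0 • H) H i j) t0 := by
  have h : HasDerivAt (fun s : ℝ => grad (X + t0 • H + s • H) i j)
      (hess (X + t0 • H) H i j) (t0 - t0) := by
    rw [sub_self]; exact hhess (X + t0 • H) H i j
  have h2 := h.comp_sub_const
  have heq : ∀ t : ℝ, X + t0 • H + (t - t0) • H = X + t • H := fun t => by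
    rw [sub_smul]; abel
  simpa [heq] using h2

lemma hess_neg_apply (X H : Matrix (Fin n) (Fin n) ℝ) (i j : Fin n) :
    hess X (-H) i j = -(hess X H i j) := by
  have h1 := hhess X (-H) i j
  have h : HasDerivAt (fun s : ℝ => grad (X + s • H) i j) (hess X H i j) ((0:ℝ) - 0) := by
    rw [sub_zero]; exact hhess X H i j
  have h2 := h.comp_const_sub
  have heq : ∀ t : ℝ, X + ((0:ℝ) - t) • H = X + t • (-H) := fun t => by
    rw [zero_sub, smul_neg, neg_smul]
  have h2' : HasDerivAt (fun t : ℝ => grad (X + t • (-H)) i j) (-(hess X H i j)) 0 := by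
    simpa [heq] using h2
  exact h1.unique h2'

lemma hasDerivAt_grad_line_neg (X H : Matrix (Fin n) (Fin n) ℝ) (t0 : ℝ) (i j : Fin n) :
    HasDerivAt (fun t : ℝ => grad (X - t • H) i j) (-(hess (X - t0 • H) H i j)) t0 := by
  have h := hasDerivAt_grad_line grad hess hhess X (-H) t0 i j
  rw [hess_neg_apply grad hess hhess _ H i j] at h
  have heq : ∀ t : ℝ, X + t • (-H) = X - t • H := fun t => by
    rw [smul_neg, sub_eq_add_neg]
  simpa only [heq] using h

lemma second_diff_bound
    (L0 σ2 : ℝ) (hL0 : 0 ≤ L0)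
    (hhessLip : ∀ X Y H : Matrix (Fin n) (Fin n) ℝ, ‖X‖ ≤ σ2 → ‖Y‖ ≤ σ2 →
      ‖hess X H - hess Y H‖ ≤ L0 * ‖H‖ * ‖X - Y‖)
    (X H : Matrix (Fin n) (Fin n) ℝ)
    (hplus : ∀ t ∈ Set.Icc (0:ℝ) 1, ‖X + t • H‖ ≤ σ2)
    (hminus : ∀ t ∈ Set.Icc (0:ℝ) 1, ‖X - t • H‖ ≤ σ2) :
    ‖grad (X + H) + grad (X - H) - (2:ℝ) • grad X‖ ≤ L0 * ‖H‖ ^ 2 := by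
  set W := grad (X + H) + grad (X - H) - (2:ℝ) • grad X with hW
  set φ : ℝ → Matrix (Fin n) (Fin n) ℝ :=
    fun t => hess (X + t • H) H - hess (X - t • H) H with hφ
  set ψ : ℝ → ℝ :=
    fun t => frobInner W (grad (X + t • H)) + frobInner W (grad (X - t • H)) with hψdef
  set ψ' : ℝ → ℝ := fun t => frobInner W (φ t) with hψ'def
  have hX0 : ‖X‖ ≤ σ2 := by simpa using hplus 0 ⟨le_refl 0, zero_le_one⟩
  have hψ : ∀ t : ℝ, HasDerivAt ψ (ψ' t) t := by
    intro t
    have h1 : HasDerivAt (fun u : ℝ => ∑ i, ∑ j, W i j * grad (X + u • H) i j)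
        (∑ i, ∑ j, W i j * hess (X + t • H) H i j) t :=
      HasDerivAt.fun_sum fun i _ => HasDerivAt.fun_sum fun j _ =>
        ((hasDerivAt_grad_line grad hess hhess X H t i j).const_mul (W i j))
    have h2 : HasDerivAt (fun u : ℝ => ∑ i, ∑ j, W i j * grad (X - u • H) i j)
        (∑ i, ∑ j, W i j * (-(hess (X - t • H) H i j))) t :=
      HasDerivAt.fun_sum fun i _ => HasDerivAt.fun_sum fun j _ =>
        ((hasDerivAt_grad_line_neg grad hess hhess X H t i j).const_mul (W i j))
    have hcomb := h1.add h2
    have hval : ψ' t = (∑ i, ∑ j, W i j * hess (X + t • H) H i j)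
        + (∑ i, ∑ j, W i j * (-(hess (X - t • H) H i j))) := by
      calc ψ' t = frobInner W (hess (X + t • H) H) - frobInner W (hess (X - t • H) H) :=
            frobInner_sub_right _ _ _
        _ = _ := by
            simp only [frobInner, mul_neg, Finset.sum_neg_distrib]
            ring
    rw [hval]
    exact hcomb
  have hφbound : ∀ t ∈ Set.Icc (0:ℝ) 1, ‖φ t‖ ≤ 2 * L0 * ‖H‖^2 * t := by
    intro t ht
    have e1 : X + t • H - X = t • H := by abel
    have e2 : X - (X - t • H) = t • H := by abel
    have b1 : ‖hess (X + t • H) H - hess X H‖ ≤ L0 * ‖H‖ * (t * ‖H‖) := by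
      have := hhessLip (X + t • H) X H (hplus t ht) hX0
      rwa [e1, norm_smul, Real.norm_eq_abs, abs_of_nonneg ht.1] at this
    have b2 : ‖hess X H - hess (X - t • H) H‖ ≤ L0 * ‖H‖ * (t * ‖H‖) := by
      have := hhessLip X (X - t • H) H hX0 (hminus t ht)
      rwa [e2, norm_smul, Real.norm_eq_abs, abs_of_nonneg ht.1] at this
    have : φ t = (hess (X + t • H) H - hess X H) + (hess X H - hess (X - t • H) H) := by
      rw [hφ]; abel
    rw [this]
    calc ‖_ + _‖ ≤ _ + _ := norm_add_le _ _
      _ ≤ L0 * ‖H‖ * (t * ‖H‖) + L0 * ‖H‖ * (t * ‖H‖) := add_le_add b1 b2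
      _ = 2 * L0 * ‖H‖^2 * t := by ring
  have hφLip : ∀ t ∈ Set.Icc (0:ℝ) 1, ∀ s ∈ Set.Icc (0:ℝ) 1,
      ‖φ t - φ s‖ ≤ 2 * L0 * ‖H‖^2 * |t - s| := by
    intro t ht s hs
    have e1 : X + t • H - (X + s • H) = (t - s) • H := by rw [sub_smul]; abel
    have e2 : X - s • H - (X - t • H) = (t - s) • H := by rw [sub_smul]; abel
    have b1 : ‖hess (X + t • H) H - hess (X + s • H) H‖ ≤ L0 * ‖H‖ * (|t - s| * ‖H‖) := by
      have := hhessLip (X + t • H) (X + s • H) H (hplus t ht) (hplus s hs)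
      rwa [e1, norm_smul, Real.norm_eq_abs] at this
    have b2 : ‖hess (X - s • H) H - hess (X - t • H) H‖ ≤ L0 * ‖H‖ * (|t - s| * ‖H‖) := by
      have := hhessLip (X - s • H) (X - t • H) H (hminus s hs) (hminus t ht)
      rwa [e2, norm_smul, Real.norm_eq_abs] at this
    have : φ t - φ s = (hess (X + t • H) H - hess (X + s • H) H)
        + (hess (X - s • H) H - hess (X - t • H) H) := by
      show (hess (X + t • H) H - hess (X - t • H) H) - (hess (X + s • H) H - hess (X - s • H) H) = _
      abel
    rw [this]
    calc ‖_ + _‖ ≤ _ + _ := norm_add_le _ _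
      _ ≤ L0 * ‖H‖ * (|t - s| * ‖H‖) + L0 * ‖H‖ * (|t - s| * ‖H‖) := add_le_add b1 b2
      _ = 2 * L0 * ‖H‖^2 * |t - s| := by ring
  have hKnn : (0:ℝ) ≤ 2 * L0 * ‖H‖^2 * ‖W‖ := by positivity
  have hcont : ContinuousOn ψ' (Set.uIcc (0:ℝ) 1) := by
    rw [Set.uIcc_of_le zero_le_one]
    refine (LipschitzOnWith.of_dist_le_mul
      (K := Real.toNNReal (2 * L0 * ‖H‖^2 * ‖W‖)) ?_).continuousOn
    intro t ht s hs
    rw [Real.dist_eq, Real.dist_eq, Real.coe_toNNReal _ hKnn]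
    have : ψ' t - ψ' s = frobInner W (φ t - φ s) := by
      rw [hψ'def, frobInner_sub_right]
    calc |ψ' t - ψ' s| = |frobInner W (φ t - φ s)| := by rw [this]
      _ ≤ ‖W‖ * ‖φ t - φ s‖ := abs_frobInner_le _ _
      _ ≤ ‖W‖ * (2 * L0 * ‖H‖^2 * |t - s|) := by
          apply mul_le_mul_of_nonneg_left (hφLip t ht s hs) (norm_nonneg _)
      _ = 2 * L0 * ‖H‖^2 * ‖W‖ * |t - s| := by ring
  have hInt : IntervalIntegrable ψ' MeasureTheory.volume 0 1 := hcont.intervalIntegrable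
  have hFTC : ∫ t in (0:ℝ)..1, ψ' t = ψ 1 - ψ 0 :=
    intervalIntegral.integral_eq_sub_of_hasDerivAt (fun t _ => hψ t) hInt
  have hbound : ∀ t ∈ Set.Icc (0:ℝ) 1, ψ' t ≤ 2 * L0 * ‖H‖^2 * ‖W‖ * t := by
    intro t ht
    calc ψ' t ≤ ‖W‖ * ‖φ t‖ := frobInner_le _ _
      _ ≤ ‖W‖ * (2 * L0 * ‖H‖^2 * t) :=
          mul_le_mul_of_nonneg_left (hφbound t ht) (norm_nonneg _)
      _ = 2 * L0 * ‖H‖^2 * ‖W‖ * t := by ring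
  have hmono : ∫ t in (0:ℝ)..1, ψ' t ≤ ∫ t in (0:ℝ)..1, 2 * L0 * ‖H‖^2 * ‖W‖ * t :=
    intervalIntegral.integral_mono_on zero_le_one hInt
      ((continuous_const.mul continuous_id).intervalIntegrable 0 1) hbound
  have hval : ∫ t in (0:ℝ)..1, 2 * L0 * ‖H‖^2 * ‖W‖ * t = L0 * ‖H‖^2 * ‖W‖ := by
    open intervalIntegral in rw [integral_const_mul, integral_id]; ring
  have hψdiff : ψ 1 - ψ 0 = ‖W‖^2 := by
    have h10 : ψ 1 - ψ 0 = frobInner W W := by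
      simp only [hψdef, one_smul, zero_smul, add_zero, sub_zero]
      conv_rhs => rw [hW]
      rw [frobInner_sub_right, frobInner_add_right, frobInner_smul_right]
      ring
    rw [h10, frobInner_self]
  have hle : ‖W‖^2 ≤ L0 * ‖H‖^2 * ‖W‖ := by
    rw [← hψdiff, ← hFTC]; rw [hval] at hmono; exact hmono
  rcases (norm_nonneg W).eq_or_lt with h0 | h0
  · rw [← h0]; positivity
  · have : ‖W‖ * ‖W‖ ≤ (L0 * ‖H‖^2) * ‖W‖ := by nlinarith [hle]
    exact le_of_mul_le_mul_right this h0

end Deriv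

section AuxVec

variable {α : Type*} [Fintype α]

lemma vecNorm_nonneg (v : α → ℝ) : 0 ≤ vecNorm v := Real.sqrt_nonneg _

lemma vecNorm_add_le (x y : α → ℝ) :
    vecNorm (fun i => x i + y i) ≤ vecNorm x + vecNorm y := by
  rw [vecNorm, vecNorm, vecNorm]
  have h1 := Real.sum_mul_le_sqrt_mul_sqrt Finset.univ x y
  have hx : (0:ℝ) ≤ ∑ i, x i ^ 2 := by positivity
  have hy : (0:ℝ) ≤ ∑ i, y i ^ 2 := by positivity
  have h2 : ∑ i, (x i + y i) ^ 2
      ≤ (Real.sqrt (∑ i, x i ^ 2) + Real.sqrt (∑ i, y i ^ 2)) ^ 2 := by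
    have e : ∑ i, (x i + y i) ^ 2 = ∑ i, x i ^ 2 + 2 * (∑ i, x i * y i) + ∑ i, y i ^ 2 := by
      rw [Finset.mul_sum, ← Finset.sum_add_distrib, ← Finset.sum_add_distrib]
      exact Finset.sum_congr rfl fun i _ => by ring
    rw [e]
    nlinarith [Real.sq_sqrt hx, Real.sq_sqrt hy, Real.sqrt_nonneg (∑ i, x i ^ 2),
      Real.sqrt_nonneg (∑ i, y i ^ 2), h1]
  calc Real.sqrt (∑ i, (x i + y i) ^ 2)
      ≤ Real.sqrt ((Real.sqrt (∑ i, x i ^ 2) + Real.sqrt (∑ i, y i ^ 2)) ^ 2) :=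
        Real.sqrt_le_sqrt h2
    _ = _ := Real.sqrt_sq (by positivity)

lemma frobInner_sym_antisym (A Z : Matrix α α ℝ) (hA : Aᵀ = A) (hZ : Zᵀ = -Z) :
    frobInner A Z = 0 := by
  have h : frobInner A Z = -frobInner A Z := by
    calc frobInner A Z = ∑ j, ∑ i, A i j * Z i j := Finset.sum_comm
      _ = ∑ j, ∑ i, -(A j i * Z j i) := by
          refine Finset.sum_congr rfl fun j _ => Finset.sum_congr rfl fun i _ => ?_
          have ha : A i j = A j i := congr_fun (congr_fun hA j) i
          have hz : Z i j = -(Z j i) := by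
            have := congr_fun (congr_fun hZ j) i
            simpa [Matrix.transpose_apply, Matrix.neg_apply] using this
          rw [ha, hz]; ring
      _ = -frobInner A Z := by
          rw [frobInner]
          simp [Finset.sum_neg_distrib]
  linarith

end AuxVec

section AuxSum

lemma sum_smul_mul_le {n r mm : ℕ} (A : Fin mm → Matrix (Fin n) (Fin n) ℝ)
    (lam : Fin mm → ℝ) (V : Matrix (Fin n) (Fin r) ℝ) :
    ‖∑ i, lam i • (A i * V)‖ ≤ vecNorm lam * Real.sqrt (sA A) * ‖V‖ := by
  calc ‖∑ i, lam i • (A i * V)‖ ≤ ∑ i, ‖lam i • (A i * V)‖ := norm_sum_le _ _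
    _ ≤ ∑ i, |lam i| * (‖A i‖ * ‖V‖) := by
        refine Finset.sum_le_sum fun i _ => ?_
        rw [norm_smul, Real.norm_eq_abs]
        exact mul_le_mul_of_nonneg_left (Matrix.frobenius_norm_mul _ _) (abs_nonneg _)
    _ = (∑ i, |lam i| * ‖A i‖) * ‖V‖ := by
        rw [Finset.sum_mul]
        exact Finset.sum_congr rfl fun i _ => (mul_assoc _ _ _).symm
    _ ≤ (vecNorm lam * Real.sqrt (sA A)) * ‖V‖ := by
        refine mul_le_mul_of_nonneg_right ?_ (norm_nonneg _)
        have h := Real.sum_mul_le_sqrt_mul_sqrt Finset.univ (fun i => |lam i|) (fun i => ‖A i‖)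
        simp only [sq_abs] at h
        rw [vecNorm, sA]
        simp only [frobNorm_eq_norm]
        exact h

end AuxSum



section Helpers

variable {n r mm : ℕ}

lemma norm_mul_transpose_le (U : Matrix (Fin n) (Fin r) ℝ) (V : Matrix (Fin n) (Fin r) ℝ) :
    ‖U * Vᵀ‖ ≤ ‖U‖ * ‖V‖ := by
  calc ‖U * Vᵀ‖ ≤ ‖U‖ * ‖Vᵀ‖ := Matrix.frobenius_norm_mul _ _
    _ = ‖U‖ * ‖V‖ := by rw [Matrix.frobenius_norm_transpose]

lemma id_P (Ub Vb : Matrix (Fin n) (Fin r) ℝ) :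
    ((2:ℝ)⁻¹ • (Ub + Vb)) * ((2:ℝ)⁻¹ • (Ub + Vb))ᵀ
      = (2:ℝ)⁻¹ • (Ub * Vbᵀ + Vb * Ubᵀ)
        + ((2:ℝ)⁻¹ • (Ub - Vb)) * ((2:ℝ)⁻¹ • (Ub - Vb))ᵀ := by
  simp only [Matrix.transpose_smul, Matrix.transpose_add, Matrix.transpose_sub,
    Matrix.smul_mul, Matrix.mul_smul, Matrix.add_mul, Matrix.mul_add,
    Matrix.sub_mul, Matrix.mul_sub]
  module

lemma id_m (Ub Vb : Matrix (Fin n) (Fin r) ℝ) :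
    (2:ℝ)⁻¹ • (Ub * Vbᵀ + Vb * Ubᵀ) - (2:ℝ)⁻¹ • (Vb * Ubᵀ - Ub * Vbᵀ) = Ub * Vbᵀ := by
  module

lemma id_mt (Ub Vb : Matrix (Fin n) (Fin r) ℝ) :
    (2:ℝ)⁻¹ • (Ub * Vbᵀ + Vb * Ubᵀ) + (2:ℝ)⁻¹ • (Vb * Ubᵀ - Ub * Vbᵀ) = Vb * Ubᵀ := by
  module

lemma id_two_delta (Ub Vb : Matrix (Fin n) (Fin r) ℝ) :
    (2:ℝ) • ((2:ℝ)⁻¹ • (Vb * Ubᵀ - Ub * Vbᵀ)) = Vb * (Ub - Vb)ᵀ - (Ub - Vb) * Vbᵀ := by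
  simp only [Matrix.transpose_sub, Matrix.mul_sub, Matrix.sub_mul]
  module

lemma id_mmt (Ub Vb : Matrix (Fin n) (Fin r) ℝ) :
    Ub * Vbᵀ - Vb * Ubᵀ = -((2:ℝ) • ((2:ℝ)⁻¹ • (Vb * Ubᵀ - Ub * Vbᵀ))) := by
  module

lemma id_delta_anti (Ub Vb : Matrix (Fin n) (Fin r) ℝ) :
    ((2:ℝ)⁻¹ • (Vb * Ubᵀ - Ub * Vbᵀ))ᵀ = -((2:ℝ)⁻¹ • (Vb * Ubᵀ - Ub * Vbᵀ)) := by
  simp only [Matrix.transpose_smul, Matrix.transpose_sub, Matrix.transpose_mul,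
    Matrix.transpose_transpose]
  module

lemma id_sum_P (Ub Vb : Matrix (Fin n) (Fin r) ℝ) :
    ((2:ℝ)⁻¹ • (Ub + Vb)) * ((2:ℝ)⁻¹ • (Ub + Vb))ᵀ
      = Ub * Vbᵀ + (2:ℝ)⁻¹ • (Vb * Ubᵀ - Ub * Vbᵀ)
        + ((2:ℝ)⁻¹ • (Ub - Vb)) * ((2:ℝ)⁻¹ • (Ub - Vb))ᵀ := by
  rw [id_P]
  congr 1
  module

lemma line_ball (bnd : ℝ) (S Δ : Matrix (Fin n) (Fin n) ℝ)
    (hS : ‖S‖ ≤ bnd) (hp : ‖S + Δ‖ ≤ bnd) :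
    ∀ t ∈ Set.Icc (0:ℝ) 1, ‖S + t • Δ‖ ≤ bnd := by
  rintro t ⟨ht0, ht1⟩
  have e : S + t • Δ = (1 - t) • S + t • (S + Δ) := by module
  rw [e]
  calc ‖(1 - t) • S + t • (S + Δ)‖ ≤ ‖(1 - t) • S‖ + ‖t • (S + Δ)‖ := norm_add_le _ _
    _ = (1 - t) * ‖S‖ + t * ‖S + Δ‖ := by
        rw [norm_smul, norm_smul, Real.norm_eq_abs, Real.norm_eq_abs,
          abs_of_nonneg (by linarith), abs_of_nonneg ht0]
    _ ≤ (1 - t) * bnd + t * bnd := by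
        have h1 : (1 - t) * ‖S‖ ≤ (1 - t) * bnd :=
          mul_le_mul_of_nonneg_left hS (by linarith)
        have h2 : t * ‖S + Δ‖ ≤ t * bnd := mul_le_mul_of_nonneg_left hp ht0
        linarith
    _ = bnd := by ring

lemma decomp_id (gP gM gMt : Matrix (Fin n) (Fin n) ℝ) (Ub Vb : Matrix (Fin n) (Fin r) ℝ)
    (γ : ℝ) (A : Fin mm → Matrix (Fin n) (Fin n) ℝ) (lamb : Fin mm → ℝ) :
    (2:ℝ) • (gP * ((2:ℝ)⁻¹ • (Ub + Vb))) + ∑ i, (2 * lamb i) • (A i * ((2:ℝ)⁻¹ • (Ub + Vb)))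
      = (gM * Vb + γ • (Ub - Vb) + ∑ i, lamb i • (A i * Vb))
        + (gMt * Ub + γ • (Vb - Ub) + ∑ i, lamb i • (A i * Ub))
        + (((2:ℝ) • gP - gMt - gM) * ((2:ℝ)⁻¹ • (Ub + Vb))
          + (gM - gMt) * ((2:ℝ)⁻¹ • (Ub - Vb))) := by
  have hsum2 : ∑ i, (2 * lamb i) • (A i * ((2:ℝ)⁻¹ • (Ub + Vb)))
      = (∑ i, lamb i • (A i * Ub)) + ∑ i, lamb i • (A i * Vb) := by
    rw [← Finset.sum_add_distrib]
    refine Finset.sum_congr rfl fun i _ => ?_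
    rw [Matrix.mul_smul, smul_smul, show (2 * lamb i) * (2:ℝ)⁻¹ = lamb i by ring,
      Matrix.mul_add, smul_add]
  rw [hsum2]
  simp only [Matrix.sub_mul, Matrix.smul_mul, Matrix.mul_smul, Matrix.mul_add, Matrix.mul_sub]
  module

end Helpers

section ScalarHelpers

lemma quad_transfer (K c γ e D : ℝ) (hK : 0 ≤ K) (hc : 0 < c) (he : 0 < e)
    (hγ : 0 < γ) (hD0 : 0 ≤ D) (h1 : Real.sqrt K * c < γ * Real.sqrt e)
    (hDb : γ * D ≤ c) : K * D ^ 2 < e := by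
  have e1 : Real.sqrt K ^ 2 = K := Real.sq_sqrt hK
  have e2 : Real.sqrt e ^ 2 = e := Real.sq_sqrt he.le
  have h4 := mul_self_lt_mul_self (by positivity) h1
  have h3 : K * c ^ 2 < γ ^ 2 * e := by
    calc K * c ^ 2 = (Real.sqrt K * c) * (Real.sqrt K * c) := by
          conv_lhs => rw [← e1]
          ring
      _ < (γ * Real.sqrt e) * (γ * Real.sqrt e) := h4
      _ = γ ^ 2 * (Real.sqrt e ^ 2) := by ring
      _ = γ ^ 2 * e := by rw [e2]
  have h5 : (γ * D) ^ 2 ≤ c ^ 2 := pow_le_pow_left₀ (by positivity) hDb 2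
  have h7 : γ ^ 2 * (K * D ^ 2) < γ ^ 2 * e := by
    calc γ ^ 2 * (K * D ^ 2) = K * (γ * D) ^ 2 := by ring
      _ ≤ K * c ^ 2 := mul_le_mul_of_nonneg_left h5 hK
      _ < γ ^ 2 * e := h3
  exact lt_of_mul_lt_mul_left h7 (by positivity)

lemma combine_first (ε σ L L0 D a b x y : ℝ) (hσ : 0 < σ) (hL : 0 < L) (hL0 : 0 < L0)
    (hD0 : 0 ≤ D)
    (hx : x ≤ (2 * (L * ((2⁻¹ * D) ^ 2)) + L0 * (σ * D) ^ 2) * σ)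
    (hy : y ≤ (L * (2 * (σ * D))) * (2⁻¹ * D))
    (ha : a ≤ ε) (hb : b ≤ ε)
    (hKD : (2 * L0 * σ ^ 3 + 3 * L * σ) * D ^ 2 < 2 * ε) :
    a + b + (x + y) ≤ 3 * ε := by nlinarith [hx, hy, ha, hb, hKD]

end ScalarHelpers

set_option maxHeartbeats 1000000 in
/-- Theorem 2.1, final claim: if γ is large enough, the averaged point
together with the doubled multiplier is a 3ε-KKT point of the Burer–Monteiro problem.
Here `nA` is any constant bounding the operator norm of 𝒜 (equivalent formulation). -/
theorem threeEps_KKT_transfer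
    (n m r : ℕ) (hn : 0 < n) (hm : 0 < m) (hr : 0 < r)
    (f : Matrix (Fin n) (Fin n) ℝ → ℝ)
    (hconv : ConvexOn ℝ Set.univ f)
    (hsym : ∀ X : Matrix (Fin n) (Fin n) ℝ, f Xᵀ = f X)
    (grad : Matrix (Fin n) (Fin n) ℝ → Matrix (Fin n) (Fin n) ℝ)
    (hgrad : ∀ X H : Matrix (Fin n) (Fin n) ℝ,
      HasDerivAt (fun t : ℝ => f (X + t • H)) (frobInner (grad X) H) 0)
    (hgradCont : Continuous grad)
    (hess : Matrix (Fin n) (Fin n) ℝ → Matrix (Fin n) (Fin n) ℝ → Matrix (Fin n) (Fin n) ℝ)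
    (hhess : ∀ X H : Matrix (Fin n) (Fin n) ℝ, ∀ i j,
      HasDerivAt (fun t : ℝ => grad (X + t • H) i j) (hess X H i j) 0)
    (A : Fin m → Matrix (Fin n) (Fin n) ℝ) (hAsym : ∀ i, (A i)ᵀ = A i)
    (b : Fin m → ℝ)
    (σ Lf L L0 γ : ℝ)
    (hσ : 0 < σ) (hLf : 0 < Lf) (hL : 0 < L) (hL0 : 0 < L0) (hγ : 0 < γ)
    (hgradB : ∀ X : Matrix (Fin n) (Fin n) ℝ, frobNorm X ≤ σ ^ 2 → frobNorm (grad X) ≤ Lf)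
    (hgradLip : ∀ X Y : Matrix (Fin n) (Fin n) ℝ, frobNorm X ≤ σ ^ 2 → frobNorm Y ≤ σ ^ 2 →
      frobNorm (grad X - grad Y) ≤ L * frobNorm (X - Y))
    (hhessLip : ∀ X Y H : Matrix (Fin n) (Fin n) ℝ, frobNorm X ≤ σ ^ 2 → frobNorm Y ≤ σ ^ 2 →
      frobNorm (hess X H - hess Y H) ≤ L0 * frobNorm H * frobNorm (X - Y))
    (nA : ℝ) (hnA : ∀ X : Matrix (Fin n) (Fin n) ℝ, vecNorm (Aop A X) ≤ nA * frobNorm X)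
    (ε : ℝ) (hε : 0 < ε)
    (Ub Vb : Matrix (Fin n) (Fin r) ℝ) (lamb : Fin m → ℝ)
    (hKKT : IsPenEpsKKT grad A b γ ε Ub Vb lamb)
    (hUb : frobNorm Ub ≤ σ) (hVb : frobNorm Vb ≤ σ) (hlamb : vecNorm lamb ≤ σ)
    (Uh : Matrix (Fin n) (Fin r) ℝ) (hUh : Uh = (2 : ℝ)⁻¹ • (Ub + Vb))
    (hγbig : γ > max
      (Real.sqrt nA * (ε + Lf * σ + Real.sqrt (sA A) * σ ^ 2) / (2 * Real.sqrt (2 * ε)))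
      (Real.sqrt (2 * L0 * σ ^ 3 + 3 * L * σ) * (ε + Lf * σ + Real.sqrt (sA A) * σ ^ 2)
        / Real.sqrt (2 * ε))) :
    IsBMEpsKKT grad A b (3 * ε) Uh (fun i => 2 * lamb i) := by
  classical
  obtain ⟨hPen1, hPen2, hfeas⟩ := hKKT
  simp only [frobNorm_eq_norm] at hPen1 hPen2 hUb hVb hgradB hgradLip hhessLip hnA
  clear hconv hsym hgrad hgradCont hm hr
  -- the half-difference and norm of difference
  set d : Matrix (Fin n) (Fin r) ℝ := (2:ℝ)⁻¹ • (Ub - Vb) with hd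
  set D : ℝ := ‖Ub - Vb‖ with hD
  have hD0 : 0 ≤ D := by rw [hD]; exact norm_nonneg _
  -- basic norm bounds
  have hUhN : ‖Uh‖ ≤ σ := by
    rw [hUh, norm_smul, Real.norm_eq_abs, abs_of_pos (by norm_num : (0:ℝ) < (2:ℝ)⁻¹)]
    calc (2:ℝ)⁻¹ * ‖Ub + Vb‖ ≤ 2⁻¹ * (‖Ub‖ + ‖Vb‖) :=
          mul_le_mul_of_nonneg_left (norm_add_le _ _) (by norm_num)
      _ ≤ 2⁻¹ * (σ + σ) :=
          mul_le_mul_of_nonneg_left (add_le_add hUb hVb) (by norm_num)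
      _ = σ := by ring
  have hdN : ‖d‖ = 2⁻¹ * D := by
    rw [hD, hd, norm_smul, Real.norm_eq_abs, abs_of_pos (by norm_num : (0:ℝ) < (2:ℝ)⁻¹)]
  have hMn : ‖Ub * Vbᵀ‖ ≤ σ ^ 2 := by
    calc ‖Ub * Vbᵀ‖ ≤ ‖Ub‖ * ‖Vb‖ := norm_mul_transpose_le _ _
      _ ≤ σ * σ := mul_le_mul hUb hVb (norm_nonneg _) hσ.le
      _ = σ ^ 2 := by ring
  have hMtn : ‖Vb * Ubᵀ‖ ≤ σ ^ 2 := by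
    calc ‖Vb * Ubᵀ‖ ≤ ‖Vb‖ * ‖Ub‖ := norm_mul_transpose_le _ _
      _ ≤ σ * σ := mul_le_mul hVb hUb (norm_nonneg _) hσ.le
      _ = σ ^ 2 := by ring
  have hPn : ‖Uh * Uhᵀ‖ ≤ σ ^ 2 := by
    calc ‖Uh * Uhᵀ‖ ≤ ‖Uh‖ * ‖Uh‖ := norm_mul_transpose_le _ _
      _ ≤ σ * σ := mul_le_mul hUhN hUhN (norm_nonneg _) hσ.le
      _ = σ ^ 2 := by ring
  set S : Matrix (Fin n) (Fin n) ℝ := (2:ℝ)⁻¹ • (Ub * Vbᵀ + Vb * Ubᵀ) with hS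
  set Δ : Matrix (Fin n) (Fin n) ℝ := (2:ℝ)⁻¹ • (Vb * Ubᵀ - Ub * Vbᵀ) with hΔ
  have hSn : ‖S‖ ≤ σ ^ 2 := by
    rw [hS, norm_smul, Real.norm_eq_abs, abs_of_pos (by norm_num : (0:ℝ) < (2:ℝ)⁻¹)]
    calc (2:ℝ)⁻¹ * ‖Ub * Vbᵀ + Vb * Ubᵀ‖ ≤ 2⁻¹ * (‖Ub * Vbᵀ‖ + ‖Vb * Ubᵀ‖) :=
          mul_le_mul_of_nonneg_left (norm_add_le _ _) (by norm_num)
      _ ≤ 2⁻¹ * (σ ^ 2 + σ ^ 2) :=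
          mul_le_mul_of_nonneg_left (add_le_add hMn hMtn) (by norm_num)
      _ = σ ^ 2 := by ring
  have hΔn : ‖Δ‖ ≤ σ * D := by
    have h2 : ‖(2:ℝ) • Δ‖ ≤ 2 * (σ * D) := by
      rw [hΔ, hD, id_two_delta]
      calc ‖Vb * (Ub - Vb)ᵀ - (Ub - Vb) * Vbᵀ‖
          ≤ ‖Vb * (Ub - Vb)ᵀ‖ + ‖(Ub - Vb) * Vbᵀ‖ := norm_sub_le _ _
        _ ≤ ‖Vb‖ * ‖Ub - Vb‖ + ‖Ub - Vb‖ * ‖Vb‖ :=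
            add_le_add (norm_mul_transpose_le _ _) (norm_mul_transpose_le _ _)
        _ ≤ σ * ‖Ub - Vb‖ + ‖Ub - Vb‖ * σ :=
            add_le_add (mul_le_mul_of_nonneg_right hVb (norm_nonneg _))
              (mul_le_mul_of_nonneg_left hVb (norm_nonneg _))
        _ = 2 * (σ * ‖Ub - Vb‖) := by ring
    rw [norm_smul, Real.norm_eq_abs, abs_of_pos (by norm_num : (0:ℝ) < 2)] at h2
    linarith only [h2]
  have hΔ0 : 0 ≤ ‖Δ‖ := norm_nonneg _
  have hddn : ‖d * dᵀ‖ ≤ (2⁻¹ * D) ^ 2 := by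
    calc ‖d * dᵀ‖ ≤ ‖d‖ * ‖d‖ := norm_mul_transpose_le _ _
      _ = (2⁻¹ * D) ^ 2 := by rw [hdN]; ring
  -- bound on γ * D
  have hsAnn : 0 ≤ Real.sqrt (sA A) := Real.sqrt_nonneg _
  have hDb : γ * D ≤ ε + Lf * σ + Real.sqrt (sA A) * σ ^ 2 := by
    have h1 : ‖grad (Ub * Vbᵀ) * Vb‖ ≤ Lf * σ := by
      calc ‖grad (Ub * Vbᵀ) * Vb‖ ≤ ‖grad (Ub * Vbᵀ)‖ * ‖Vb‖ := Matrix.frobenius_norm_mul _ _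
        _ ≤ Lf * σ := mul_le_mul (hgradB _ hMn) hVb (norm_nonneg _) hLf.le
    have h2 : ‖∑ i, lamb i • (A i * Vb)‖ ≤ Real.sqrt (sA A) * σ ^ 2 := by
      calc ‖∑ i, lamb i • (A i * Vb)‖ ≤ vecNorm lamb * Real.sqrt (sA A) * ‖Vb‖ :=
            sum_smul_mul_le A lamb Vb
        _ ≤ σ * Real.sqrt (sA A) * σ :=
            mul_le_mul (mul_le_mul_of_nonneg_right hlamb hsAnn) hVb
              (norm_nonneg _) (by positivity)
        _ = Real.sqrt (sA A) * σ ^ 2 := by ring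
    have hrw : γ • (Ub - Vb) =
        (grad (Ub * Vbᵀ) * Vb + γ • (Ub - Vb) + ∑ i, lamb i • (A i * Vb))
          - grad (Ub * Vbᵀ) * Vb - ∑ i, lamb i • (A i * Vb) := by abel
    calc γ * D = ‖γ • (Ub - Vb)‖ := by
          rw [hD, norm_smul, Real.norm_eq_abs, abs_of_pos hγ]
      _ = ‖(grad (Ub * Vbᵀ) * Vb + γ • (Ub - Vb) + ∑ i, lamb i • (A i * Vb))
            - grad (Ub * Vbᵀ) * Vb - ∑ i, lamb i • (A i * Vb)‖ := by rw [← hrw]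
      _ ≤ ‖(grad (Ub * Vbᵀ) * Vb + γ • (Ub - Vb) + ∑ i, lamb i • (A i * Vb))
            - grad (Ub * Vbᵀ) * Vb‖ + ‖∑ i, lamb i • (A i * Vb)‖ := norm_sub_le _ _
      _ ≤ (‖grad (Ub * Vbᵀ) * Vb + γ • (Ub - Vb) + ∑ i, lamb i • (A i * Vb)‖
            + ‖grad (Ub * Vbᵀ) * Vb‖) + ‖∑ i, lamb i • (A i * Vb)‖ :=
          add_le_add_left (norm_sub_le _ _) _
      _ ≤ (ε + Lf * σ) + Real.sqrt (sA A) * σ ^ 2 :=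
          add_le_add (add_le_add hPen1 h1) h2
      _ = ε + Lf * σ + Real.sqrt (sA A) * σ ^ 2 := by ring
  have hc : 0 < ε + Lf * σ + Real.sqrt (sA A) * σ ^ 2 := by positivity
  have h2ε : (0:ℝ) < 2 * ε := by linarith only [hε]
  -- quadratic smallness of D
  have hKD : (2 * L0 * σ ^ 3 + 3 * L * σ) * D ^ 2 < 2 * ε := by
    have h1 : Real.sqrt (2 * L0 * σ ^ 3 + 3 * L * σ)
        * (ε + Lf * σ + Real.sqrt (sA A) * σ ^ 2) / Real.sqrt (2 * ε) < γ :=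
      lt_of_le_of_lt (le_max_right _ _) hγbig
    rw [div_lt_iff₀ (Real.sqrt_pos.mpr h2ε)] at h1
    exact quad_transfer _ _ _ _ _ (by positivity) hc h2ε hγ hD0 h1 hDb
  have hnA0 : 0 ≤ nA := by
    have hsum : ∑ i : Fin n, ∑ j : Fin n, ((1 : Matrix (Fin n) (Fin n) ℝ) i j) ^ 2 = n := by
      simp [Matrix.one_apply, apply_ite (fun x : ℝ => x ^ 2)]
    have hpos : 0 < ‖(1 : Matrix (Fin n) (Fin n) ℝ)‖ := by
      rw [← frobNorm_eq_norm, frobNorm, hsum]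
      exact Real.sqrt_pos.mpr (by exact_mod_cast hn)
    nlinarith [hnA 1, vecNorm_nonneg (Aop A (1 : Matrix (Fin n) (Fin n) ℝ)), hpos]
  have hnAD : nA * D ^ 2 < 8 * ε := by
    have h1 : Real.sqrt nA * (ε + Lf * σ + Real.sqrt (sA A) * σ ^ 2)
        / (2 * Real.sqrt (2 * ε)) < γ := lt_of_le_of_lt (le_max_left _ _) hγbig
    rw [div_lt_iff₀ (by positivity)] at h1
    have h8 : (8:ℝ) * ε = 4 * (2 * ε) := by ring
    have hsq8 : Real.sqrt (8 * ε) = 2 * Real.sqrt (2 * ε) := by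
      rw [h8, show (4:ℝ) * (2 * ε) = 2^2 * (2*ε) by ring, Real.sqrt_mul (by positivity),
        Real.sqrt_sq (by norm_num)]
    have h1' : Real.sqrt nA * (ε + Lf * σ + Real.sqrt (sA A) * σ ^ 2)
        < γ * Real.sqrt (8 * ε) := by rw [hsq8]; exact h1
    exact quad_transfer _ _ _ _ _ hnA0 hc (by linarith only [hε]) hγ hD0 h1' hDb
  -- second-order difference bound
  have hTb : ‖grad (Vb * Ubᵀ) + grad (Ub * Vbᵀ) - (2:ℝ) • grad S‖ ≤ L0 * ‖Δ‖ ^ 2 := by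
    have hplus : ∀ t ∈ Set.Icc (0:ℝ) 1, ‖S + t • Δ‖ ≤ σ ^ 2 := by
      refine line_ball (σ ^ 2) S Δ hSn ?_
      rw [hS, hΔ, id_mt]; exact hMtn
    have hminus : ∀ t ∈ Set.Icc (0:ℝ) 1, ‖S - t • Δ‖ ≤ σ ^ 2 := by
      intro t ht
      have h := line_ball (σ ^ 2) S (-Δ) hSn (by
        rw [← sub_eq_add_neg, hS, hΔ, id_m]; exact hMn) t ht
      rwa [smul_neg, ← sub_eq_add_neg] at h
    have hhessLip' : ∀ X Y H : Matrix (Fin n) (Fin n) ℝ, ‖X‖ ≤ σ ^ 2 → ‖Y‖ ≤ σ ^ 2 →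
        ‖hess X H - hess Y H‖ ≤ L0 * ‖H‖ * ‖X - Y‖ := hhessLip
    have h := second_diff_bound grad hess hhess L0 (σ ^ 2) hL0.le hhessLip' S Δ hplus hminus
    rw [show S + Δ = Vb * Ubᵀ by rw [hS, hΔ]; exact id_mt Ub Vb,
      show S - Δ = Ub * Vbᵀ by rw [hS, hΔ]; exact id_m Ub Vb] at h
    exact h
  -- Lipschitz bounds
  have hgPS : ‖grad (Uh * Uhᵀ) - grad S‖ ≤ L * ((2⁻¹ * D) ^ 2) := by
    have h := hgradLip (Uh * Uhᵀ) S hPn hSn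
    have e : Uh * Uhᵀ - S = d * dᵀ := by
      rw [hUh, hS, hd, id_P]; abel
    rw [e] at h
    exact h.trans (mul_le_mul_of_nonneg_left hddn hL.le)
  have hgMMt : ‖grad (Ub * Vbᵀ) - grad (Vb * Ubᵀ)‖ ≤ L * (2 * (σ * D)) := by
    have h := hgradLip (Ub * Vbᵀ) (Vb * Ubᵀ) hMn hMtn
    rw [show Ub * Vbᵀ - Vb * Ubᵀ = -((2:ℝ) • Δ) by rw [hΔ]; exact id_mmt Ub Vb,
      norm_neg, norm_smul, Real.norm_eq_abs, abs_of_pos (by norm_num : (0:ℝ) < 2)] at h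
    refine h.trans ?_
    have := mul_le_mul_of_nonneg_left hΔn (by norm_num : (0:ℝ) ≤ 2)
    exact mul_le_mul_of_nonneg_left this hL.le
  -- first KKT condition
  have hE1 : ‖(2:ℝ) • grad (Uh * Uhᵀ) - grad (Vb * Ubᵀ) - grad (Ub * Vbᵀ)‖
      ≤ 2 * (L * ((2⁻¹ * D) ^ 2)) + L0 * (σ * D) ^ 2 := by
    have e : (2:ℝ) • grad (Uh * Uhᵀ) - grad (Vb * Ubᵀ) - grad (Ub * Vbᵀ)
        = (2:ℝ) • (grad (Uh * Uhᵀ) - grad S)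
          - (grad (Vb * Ubᵀ) + grad (Ub * Vbᵀ) - (2:ℝ) • grad S) := by module
    rw [e]
    calc ‖_ - _‖ ≤ ‖(2:ℝ) • (grad (Uh * Uhᵀ) - grad S)‖
          + ‖grad (Vb * Ubᵀ) + grad (Ub * Vbᵀ) - (2:ℝ) • grad S‖ := norm_sub_le _ _
      _ ≤ 2 * (L * ((2⁻¹ * D) ^ 2)) + L0 * (σ * D) ^ 2 := by
          refine add_le_add ?_ (hTb.trans ?_)
          · rw [norm_smul, Real.norm_eq_abs, abs_of_pos (by norm_num : (0:ℝ) < 2)]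
            exact mul_le_mul_of_nonneg_left hgPS (by norm_num)
          · refine mul_le_mul_of_nonneg_left ?_ hL0.le
            exact pow_le_pow_left₀ hΔ0 hΔn 2
  have hfirst : ‖(2:ℝ) • (grad (Uh * Uhᵀ) * Uh) + ∑ i, (2 * lamb i) • (A i * Uh)‖
      ≤ 3 * ε := by
    have hdec := decomp_id (grad (Uh * Uhᵀ)) (grad (Ub * Vbᵀ)) (grad (Vb * Ubᵀ))
      Ub Vb γ A lamb
    rw [← hUh, ← hd] at hdec
    rw [hdec]
    have t1 : ‖((2:ℝ) • grad (Uh * Uhᵀ) - grad (Vb * Ubᵀ) - grad (Ub * Vbᵀ)) * Uh‖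
        ≤ (2 * (L * ((2⁻¹ * D) ^ 2)) + L0 * (σ * D) ^ 2) * σ :=
      (Matrix.frobenius_norm_mul _ _).trans
        (mul_le_mul hE1 hUhN (norm_nonneg _) (by positivity))
    have t2 : ‖(grad (Ub * Vbᵀ) - grad (Vb * Ubᵀ)) * d‖
        ≤ (L * (2 * (σ * D))) * (2⁻¹ * D) :=
      (Matrix.frobenius_norm_mul _ _).trans
        (by rw [hdN]; exact mul_le_mul_of_nonneg_right hgMMt (by positivity))
    calc ‖_ + _ + (_ + _)‖
        ≤ (‖grad (Ub * Vbᵀ) * Vb + γ • (Ub - Vb) + ∑ i, lamb i • (A i * Vb)‖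
            + ‖grad (Vb * Ubᵀ) * Ub + γ • (Vb - Ub) + ∑ i, lamb i • (A i * Ub)‖)
          + (‖((2:ℝ) • grad (Uh * Uhᵀ) - grad (Vb * Ubᵀ) - grad (Ub * Vbᵀ)) * Uh‖
            + ‖(grad (Ub * Vbᵀ) - grad (Vb * Ubᵀ)) * d‖) :=
          (norm_add_le _ _).trans (add_le_add (norm_add_le _ _) (norm_add_le _ _))
      _ ≤ 3 * ε :=
          combine_first ε σ L L0 D _ _ _ _ hσ hL hL0 hD0 t1 t2 hPen1 hPen2 hKD
  -- feasibility
  have hA0 : ∀ i, Aop A (Uh * Uhᵀ) i = Aop A (Ub * Vbᵀ) i + Aop A (d * dᵀ) i := by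
    intro i
    have e : Uh * Uhᵀ = Ub * Vbᵀ + Δ + d * dᵀ := by
      rw [hUh, hΔ, hd]; exact id_sum_P Ub Vb
    show frobInner (A i) (Uh * Uhᵀ) = frobInner (A i) (Ub * Vbᵀ) + frobInner (A i) (d * dᵀ)
    rw [e, frobInner_add_right, frobInner_add_right,
      frobInner_sym_antisym (A i) Δ (hAsym i) (by rw [hΔ]; exact id_delta_anti Ub Vb)]
    ring
  have hsecond : vecNorm (fun i => Aop A (Uh * Uhᵀ) i - b i) ≤ 3 * ε := by
    have e : (fun i => Aop A (Uh * Uhᵀ) i - b i)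
        = fun i => (Aop A (Ub * Vbᵀ) i - b i) + Aop A (d * dᵀ) i :=
      funext fun i => by rw [hA0 i]; ring
    rw [e]
    calc vecNorm (fun i => (Aop A (Ub * Vbᵀ) i - b i) + Aop A (d * dᵀ) i)
        ≤ vecNorm (fun i => Aop A (Ub * Vbᵀ) i - b i) + vecNorm (Aop A (d * dᵀ)) :=
          vecNorm_add_le _ _
      _ ≤ ε + nA * ‖d * dᵀ‖ := add_le_add hfeas (hnA _)
      _ ≤ ε + nA * ((2⁻¹ * D) ^ 2) :=
          add_le_add_right (mul_le_mul_of_nonneg_left hddn hnA0) _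
      _ ≤ 3 * ε := by nlinarith [hnAD, hnA0, hε, sq_nonneg D]
  exact ⟨by rw [frobNorm_eq_norm]; exact hfirst, hsecond⟩
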